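/- For every real k with 0 < k² < 1, letting k' = sqrt(1-k²), one has ∫₀¹ x·arcsin(x)/sqrt((1-k²x²)³) dx = (1/k²)·(π/(2k') - K(k)). -/

import Mathlib

open Real MeasureTheory Set intervalIntegral

theorem stmt_8 (k : ℝ) (hk0 : 0 < k ^ 2) (hk1 : k ^ 2 < 1) :
    ∫ x in (0:ℝ)..1, x * Real.arcsin x / Real.sqrt ((1 - k ^ 2 * x ^ 2) ^ 3) =
      (1 / k ^ 2) * (Real.pi / (2 * Real.sqrt (1 - k ^ 2)) -
        ∫ x in (0:ℝ)..1, 1 / Real.sqrt ((1 - x ^ 2) * (1 - k ^ 2 * x ^ 2))) := by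
  set c := k ^ 2 with hc
  have hc1 : (0:ℝ) < 1 - c := by linarith
  set f : ℝ → ℝ := fun x => x * Real.arcsin x / Real.sqrt ((1 - c * x ^ 2) ^ 3) with hf
  set g : ℝ → ℝ := fun x => 1 / Real.sqrt ((1 - x ^ 2) * (1 - c * x ^ 2)) with hg
  set G : ℝ → ℝ := fun x => Real.arcsin x / (c * Real.sqrt (1 - c * x ^ 2)) with hG
  -- positivity of 1 - c x² on [0,1]
  have hu : ∀ x : ℝ, x ∈ Icc (0:ℝ) 1 → 0 < 1 - c * x ^ 2 := by
    intro x hx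
    have h1 : x ^ 2 ≤ 1 := by nlinarith [hx.1, hx.2]
    nlinarith
  -- continuity of G on [0,1]
  have hGcont : ContinuousOn G (Icc (0:ℝ) 1) := by
    apply ContinuousOn.div (Real.continuous_arcsin.continuousOn)
    · exact (continuous_const.mul ((continuous_const.sub
        (continuous_const.mul (continuous_pow 2))).sqrt)).continuousOn
    · intro x hx
      have := hu x hx
      positivity
  -- derivative on Ioo 0 1
  have hderiv : ∀ x ∈ Ioo (0:ℝ) 1, HasDerivAt G (f x + (1/c) * g x) x := by
    intro x hx
    have hx0 : (0:ℝ) < x := hx.1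
    have hx1 : x < 1 := hx.2
    have hux : 0 < 1 - c * x ^ 2 := hu x ⟨hx0.le, hx1.le⟩
    have hvx : 0 < 1 - x ^ 2 := by nlinarith
    have h1 : HasDerivAt Real.arcsin (1 / Real.sqrt (1 - x ^ 2)) x :=
      Real.hasDerivAt_arcsin (by linarith) (by linarith)
    have h2 : HasDerivAt (fun y : ℝ => 1 - c * y ^ 2) (-(c * (2 * x))) x := by
      simpa using ((hasDerivAt_pow 2 x).const_mul c).const_sub 1
    have h3 : HasDerivAt (fun y : ℝ => Real.sqrt (1 - c * y ^ 2))
        (-(c * (2 * x)) / (2 * Real.sqrt (1 - c * x ^ 2))) x := h2.sqrt hux.ne'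
    have hsu : 0 < Real.sqrt (1 - c * x ^ 2) := Real.sqrt_pos.2 hux
    have hsv : 0 < Real.sqrt (1 - x ^ 2) := Real.sqrt_pos.2 hvx
    have hne : c * Real.sqrt (1 - c * x ^ 2) ≠ 0 := by positivity
    have h4 := ((h3.const_mul c).inv hne)
    have h5 := h1.mul h4
    have hGeq : G = Real.arcsin * (fun y => c * Real.sqrt (1 - c * y ^ 2))⁻¹ := by
      funext y; simp [hG, div_eq_mul_inv]
    rw [hGeq]
    refine h5.congr_deriv ?_
    symm
    have e1 : Real.sqrt ((1 - c * x ^ 2) ^ 3) =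
        (1 - c * x ^ 2) * Real.sqrt (1 - c * x ^ 2) := by
      rw [pow_succ, Real.sqrt_mul (by positivity), Real.sqrt_sq hux.le]
    have e2 : Real.sqrt ((1 - x ^ 2) * (1 - c * x ^ 2)) =
        Real.sqrt (1 - x ^ 2) * Real.sqrt (1 - c * x ^ 2) :=
      Real.sqrt_mul hvx.le _
    simp only [hf, hg, e1, e2, Pi.inv_apply]
    set s := Real.sqrt (1 - c * x ^ 2) with hsdef
    set t := Real.sqrt (1 - x ^ 2) with htdef
    have hs2 : s ^ 2 = 1 - c * x ^ 2 := Real.sq_sqrt hux.le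
    rw [← hs2]
    have hcne : c ≠ 0 := hk0.ne'
    field_simp
    ring
  -- integrability of f
  have hfint : IntervalIntegrable f volume 0 1 := by
    apply ContinuousOn.intervalIntegrable
    rw [uIcc_of_le (by norm_num)]
    apply ContinuousOn.div
    · exact (continuous_id.mul Real.continuous_arcsin).continuousOn
    · exact ((continuous_const.sub (continuous_const.mul (continuous_pow 2))).pow 3).sqrt.continuousOn
    · intro x hx
      have := hu x hx
      positivity
  -- integrability of g
  have hgint : IntervalIntegrable g volume 0 1 := by
    rw [intervalIntegrable_iff_integrableOn_Ioc_of_le (by norm_num)]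
    have hbint : IntegrableOn (fun x : ℝ => (1 / Real.sqrt (1 - c)) * (1 - x) ^ (-(1/2) : ℝ))
        (Ioc 0 1) volume := by
      have h0 : IntervalIntegrable (fun x : ℝ => x ^ (-(1/2) : ℝ)) volume 1 0 :=
        intervalIntegrable_rpow' (by norm_num)
      have h1 := (h0.comp_sub_left 1).const_mul (1 / Real.sqrt (1 - c))
      simpa [intervalIntegrable_iff_integrableOn_Ioc_of_le] using h1
    apply Integrable.mono' hbint
    · apply Measurable.aestronglyMeasurable
      apply Measurable.div measurable_const
      exact ((continuous_const.sub (continuous_pow 2)).mul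
        (continuous_const.sub (continuous_const.mul (continuous_pow 2)))).sqrt.measurable
    · rw [ae_restrict_iff' measurableSet_Ioc]
      filter_upwards with x hx
      have hx0 : (0:ℝ) < x := hx.1
      have hx1 : x ≤ 1 := hx.2
      have hux : 0 < 1 - c * x ^ 2 := hu x ⟨hx0.le, hx1⟩
      have hgnn : 0 ≤ g x := by
        simp only [hg]
        positivity
      rw [Real.norm_of_nonneg hgnn]
      rcases eq_or_lt_of_le hx1 with rfl | hx1'
      · simp [hg, Real.zero_rpow, (by norm_num : (-(1/2) : ℝ) ≠ 0)]
      · have hvx : 0 < 1 - x ^ 2 := by nlinarith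
        have key : Real.sqrt (1 - x) * Real.sqrt (1 - c) ≤
            Real.sqrt ((1 - x ^ 2) * (1 - c * x ^ 2)) := by
          rw [← Real.sqrt_mul (by linarith)]
          apply Real.sqrt_le_sqrt
          have hxx : 1 - x ≤ 1 - x ^ 2 := by nlinarith
          have hcc : 1 - c ≤ 1 - c * x ^ 2 := by nlinarith
          nlinarith
        have hs1x : 0 < Real.sqrt (1 - x) := Real.sqrt_pos.2 (by linarith)
        have hs1c : 0 < Real.sqrt (1 - c) := Real.sqrt_pos.2 hc1
        have hrw : (1 - x) ^ (-(1/2) : ℝ) = (Real.sqrt (1 - x))⁻¹ := by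
          rw [Real.rpow_neg (by linarith), Real.sqrt_eq_rpow]
        rw [hrw]
        have heq : (1:ℝ) / Real.sqrt (1 - c) * (Real.sqrt (1 - x))⁻¹ =
            1 / (Real.sqrt (1 - x) * Real.sqrt (1 - c)) := by
          field_simp
        simp only [hg]
        rw [heq]
        exact one_div_le_one_div_of_le (by positivity) key
  -- FTC
  have hsum : IntervalIntegrable (fun x => f x + (1/c) * g x) volume 0 1 :=
    hfint.add (hgint.const_mul _)
  have hFTC : (∫ x in (0:ℝ)..1, (f x + (1/c) * g x)) = G 1 - G 0 := by
    apply intervalIntegral.integral_eq_sub_of_hasDeriv_right_of_le (by norm_num) hGcont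
      (fun x hx => (hderiv x hx).hasDerivWithinAt) hsum
  rw [intervalIntegral.integral_add hfint (hgint.const_mul _)] at hFTC
  rw [intervalIntegral.integral_const_mul] at hFTC
  have hG1 : G 1 = (Real.pi / 2) / (c * Real.sqrt (1 - c)) := by
    simp [hG, Real.arcsin_one]
  have hG0 : G 0 = 0 := by simp [hG]
  rw [hG1, hG0, sub_zero] at hFTC
  have hsc : Real.sqrt (1 - c) ≠ 0 := (Real.sqrt_pos.2 hc1).ne'
  have hcne : c ≠ 0 := hk0.ne'
  rw [hf] at hFTC ⊢
  rw [hg] at hFTC ⊢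
  rw [show (∫ x in (0:ℝ)..1, x * Real.arcsin x / Real.sqrt ((1 - c * x ^ 2) ^ 3))
      = Real.pi / 2 / (c * Real.sqrt (1 - c)) - (1/c) * ∫ x in (0:ℝ)..1,
        1 / Real.sqrt ((1 - x ^ 2) * (1 - c * x ^ 2)) from by linarith [hFTC]]
  field_simp
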